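/- Let N ≥ 3, p ∈ (1, (N+2)/(N-2)], λ ≥ 0, and let u be a solution of -Δu - uΔ(|u|²) - λu - |u|^{p-1}u = 0 satisfying the Pohozaev identity ((N-2)/N)(½‖∇u‖₂² + ∫|u|²|∇u|²) - (λ/2)‖u‖₂² = (1/(p+1))‖u‖_{p+1}^{p+1} and the Nehari identity ‖∇u‖₂² + 4∫|u|²|∇u|² - λ‖u‖₂² - ‖u‖_{p+1}^{p+1} = 0. Then u ≡ 0. -/

import Mathlib

open MeasureTheory

open MeasureTheory MeasureTheory.Measure Metric Set Filter Topology Pointwise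

lemma ae_fderiv_zero_on_zero_set {E : Type*} [NormedAddCommGroup E] [NormedSpace ℝ E]
    [MeasurableSpace E] [BorelSpace E] [FiniteDimensional ℝ E] [SecondCountableTopology E]
    (μ : Measure E) [μ.IsAddHaarMeasure] (u : E → ℝ) :
    ∀ᵐ x ∂μ, u x = 0 → fderiv ℝ u x = 0 := by
  set s : Set E := {x | u x = 0} with hs
  have H : ∀ᵐ x ∂(μ.restrict s), u x = 0 → fderiv ℝ u x = 0 := by
    filter_upwards [Besicovitch.ae_tendsto_measure_inter_div μ s] with x hx
    intro hxs
    by_cases hd : DifferentiableAt ℝ u x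
    swap
    · exact fderiv_zero_of_not_differentiableAt hd
    set D := fderiv ℝ u x with hD
    have hder : HasFDerivAt u D x := hd.hasFDerivAt
    ext z
    show D z = 0
    have key : ∀ ε : ℝ, 0 < ε → ‖D z‖ ≤ ε * (‖z‖ + ε) + ‖D‖ * ε := by
      intro ε εpos
      have B₁ : ∀ᶠ r in 𝓝[>] (0 : ℝ), (s ∩ ({x} + r • closedBall z ε)).Nonempty :=
        eventually_nonempty_inter_smul_of_density_one μ s x hx _ measurableSet_closedBall
          (measure_closedBall_pos μ z εpos).ne'
      obtain ⟨ρ, ρpos, hρ⟩ : ∃ ρ > 0, ball x ρ ⊆ {y : E | ‖u y - u x - D (y - x)‖ ≤ ε * ‖y - x‖} := by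
        have := hder.isLittleO.def εpos
        rcases Metric.mem_nhds_iff.1 this with ⟨ρ, ρpos, hball⟩
        exact ⟨ρ, ρpos, hball⟩
      have B₂ : ∀ᶠ r in 𝓝[>] (0 : ℝ), {x} + r • closedBall z ε ⊆ ball x ρ :=
        nhdsWithin_le_nhds
          (eventually_singleton_add_smul_subset isBounded_closedBall (ball_mem_nhds x ρpos))
      obtain ⟨r, ⟨y, ys, hy⟩, rρ, rpos⟩ :
          ∃ r : ℝ, (s ∩ ({x} + r • closedBall z ε)).Nonempty ∧
            ({x} + r • closedBall z ε ⊆ ball x ρ) ∧ 0 < r :=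
        (B₁.and (B₂.and self_mem_nhdsWithin)).exists
      obtain ⟨a, az, ya⟩ : ∃ a, a ∈ closedBall z ε ∧ y = x + r • a := by
        simp only [mem_smul_set, image_add_left, mem_preimage, singleton_add] at hy
        rcases hy with ⟨a, az, ha⟩
        exact ⟨a, az, by simp only [ha, add_neg_cancel_left]⟩
      have hyball : y ∈ ball x ρ := rρ hy
      have happrox : ‖u y - u x - D (y - x)‖ ≤ ε * ‖y - x‖ := hρ hyball
      have huy : u y = 0 := ys
      have hDa : ‖D a‖ ≤ ε * ‖a‖ := by
        have heq : y - x = r • a := by rw [ya]; abel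
        have h1 : ‖D (r • a)‖ ≤ ε * ‖r • a‖ := by
          calc ‖D (r • a)‖ = ‖u y - u x - D (y - x)‖ := by
                rw [heq, huy, hxs]; simp
            _ ≤ ε * ‖y - x‖ := happrox
            _ = ε * ‖r • a‖ := by rw [heq]
        rw [D.map_smul, norm_smul, norm_smul, Real.norm_eq_abs, abs_of_pos rpos] at h1
        exact le_of_mul_le_mul_left (by linarith [h1]) rpos
      have norm_a : ‖a‖ ≤ ‖z‖ + ε := by
        calc ‖a‖ = ‖z + (a - z)‖ := by rw [show z + (a - z) = a by abel]
          _ ≤ ‖z‖ + ‖a - z‖ := norm_add_le _ _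
          _ ≤ ‖z‖ + ε := by
              have := mem_closedBall_iff_norm.1 az
              linarith
      have hDz : D z = D a - D (a - z) := by rw [ContinuousLinearMap.map_sub]; ring
      calc ‖D z‖ = ‖D a - D (a - z)‖ := by rw [hDz]
        _ ≤ ‖D a‖ + ‖D (a - z)‖ := norm_sub_le _ _
        _ ≤ ε * (‖z‖ + ε) + ‖D‖ * ε := by
            gcongr
            · calc ‖D a‖ ≤ ε * ‖a‖ := hDa
                _ ≤ ε * (‖z‖ + ε) := by nlinarith
            · calc ‖D (a - z)‖ ≤ ‖D‖ * ‖a - z‖ := D.le_opNorm _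
                _ ≤ ‖D‖ * ε := by
                    have h := mem_closedBall_iff_norm.1 az
                    have : ‖a - z‖ ≤ ε := h
                    exact mul_le_mul_of_nonneg_left this (norm_nonneg _)
    have hlim : Tendsto (fun ε : ℝ => ε * (‖z‖ + ε) + ‖D‖ * ε) (𝓝[>] 0)
        (𝓝 (0 * (‖z‖ + 0) + ‖D‖ * 0)) := by
      apply Tendsto.mono_left (Continuous.tendsto (by fun_prop) 0) nhdsWithin_le_nhds
    simp only [zero_mul, mul_zero, add_zero] at hlim
    have hle : ‖D z‖ ≤ 0 := by
      apply le_of_tendsto_of_tendsto tendsto_const_nhds hlim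
      filter_upwards [self_mem_nhdsWithin] with ε hε
      exact key ε hε
    have : ‖D z‖ = 0 := le_antisymm hle (norm_nonneg _)
    simpa using this
  -- transfer from restricted measure to μ
  rw [ae_iff] at H ⊢
  have hsub : {x | ¬(u x = 0 → fderiv ℝ u x = 0)} ⊆ s := by
    intro x hx
    by_contra hxs
    exact hx fun h => absurd h hxs
  refine nonpos_iff_eq_zero.1 ?_
  calc μ {x | ¬(u x = 0 → fderiv ℝ u x = 0)}
      = μ ({x | ¬(u x = 0 → fderiv ℝ u x = 0)} ∩ s) := by rw [inter_eq_left.2 hsub]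
    _ ≤ μ.restrict s {x | ¬(u x = 0 → fderiv ℝ u x = 0)} := Measure.le_restrict_apply _ _
    _ = 0 := H


set_option maxHeartbeats 1000000 in
/-- Non-existence (Liouville-type) result: if `λ ≥ 0`, `1 < p ≤ (N+2)/(N-2)`, `N ≥ 3`,
and `u` satisfies the Pohozaev and Nehari identities for the quasilinear equation,
then `u ≡ 0`. -/
theorem stmt0 (N : ℕ) (hN : 3 ≤ N) (p lam : ℝ) (hp1 : 1 < p)
    (hp2 : p ≤ ((N : ℝ) + 2) / ((N : ℝ) - 2)) (hlam : 0 ≤ lam)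
    (u : EuclideanSpace ℝ (Fin N) → ℝ)
    (hL2 : Integrable (fun x => (u x) ^ 2))
    (hG : Integrable (fun x => ‖fderiv ℝ u x‖ ^ 2))
    (hV : Integrable (fun x => (u x) ^ 2 * ‖fderiv ℝ u x‖ ^ 2))
    (hP : Integrable (fun x => |u x| ^ (p + 1)))
    (hPoho : (((N : ℝ) - 2) / N) *
        ((1 / 2) * (∫ x, ‖fderiv ℝ u x‖ ^ 2) + ∫ x, (u x) ^ 2 * ‖fderiv ℝ u x‖ ^ 2)
        - (lam / 2) * (∫ x, (u x) ^ 2)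
        = (1 / (p + 1)) * ∫ x, |u x| ^ (p + 1))
    (hNehari : (∫ x, ‖fderiv ℝ u x‖ ^ 2)
        + 4 * (∫ x, (u x) ^ 2 * ‖fderiv ℝ u x‖ ^ 2)
        - lam * (∫ x, (u x) ^ 2) - (∫ x, |u x| ^ (p + 1)) = 0) :
    u =ᵐ[volume] 0 := by
  set A : ℝ := ∫ x, ‖fderiv ℝ u x‖ ^ 2 with hA
  set B : ℝ := ∫ x, (u x) ^ 2 * ‖fderiv ℝ u x‖ ^ 2 with hB
  set L : ℝ := ∫ x, (u x) ^ 2 with hL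
  set P : ℝ := ∫ x, |u x| ^ (p + 1) with hPdef
  clear_value A B L P
  have hN3 : (3 : ℝ) ≤ (N : ℝ) := by exact_mod_cast hN
  have hn0 : (N : ℝ) ≠ 0 := by linarith
  have hn2 : (0 : ℝ) < (N : ℝ) - 2 := by linarith
  have hp10 : p + 1 ≠ 0 := by linarith
  have hA0 : 0 ≤ A := by rw [hA]; exact integral_nonneg fun x => by positivity
  have hB0 : 0 ≤ B := by rw [hB]; exact integral_nonneg fun x => by positivity
  have hL0 : 0 ≤ L := by rw [hL]; exact integral_nonneg fun x => by positivity
  -- cleared Pohozaev identity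
  have e1 : ((N : ℝ) - 2) * (p + 1) * ((1/2) * A + B) - (N : ℝ) * (p + 1) * (lam / 2) * L
      = (N : ℝ) * P := by
    have h := hPoho
    field_simp at h
    linarith [h]
  have key : lam * L * ((N : ℝ) * (p - 1))
      = (((N : ℝ) - 2) * p - ((N : ℝ) + 2)) * A
        + 2 * (((N : ℝ) - 2) * p - (3 * (N : ℝ) + 2)) * B := by
    linear_combination (-2) * e1 + 2 * (N : ℝ) * hNehari
  have hc1 : ((N : ℝ) - 2) * p - ((N : ℝ) + 2) ≤ 0 := by
    have := (le_div_iff₀ hn2).1 hp2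
    nlinarith
  have hc2 : ((N : ℝ) - 2) * p - (3 * (N : ℝ) + 2) < 0 := by nlinarith [hc1]
  have hlamL : 0 ≤ lam * L * ((N : ℝ) * (p - 1)) := by
    have : (0:ℝ) ≤ (N : ℝ) * (p - 1) := by nlinarith
    have h2 : 0 ≤ lam * L := mul_nonneg hlam hL0
    exact mul_nonneg h2 this
  have t1 : (((N : ℝ) - 2) * p - ((N : ℝ) + 2)) * A ≤ 0 :=
    mul_nonpos_of_nonpos_of_nonneg hc1 hA0
  have hS : 0 ≤ 2 * (((N : ℝ) - 2) * p - (3 * (N : ℝ) + 2)) * B := by linarith [key, hlamL, t1]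
  have hBz : B = 0 := by
    rcases hB0.eq_or_lt with h | h
    · exact h.symm
    · exfalso
      have : 2 * (((N : ℝ) - 2) * p - (3 * (N : ℝ) + 2)) * B < 0 :=
        mul_neg_of_neg_of_pos (by linarith) h
      linarith
  have hlamL0 : lam * L = 0 := by
    have hnp : (0:ℝ) < (N : ℝ) * (p - 1) := by nlinarith
    have h0 : lam * L * ((N : ℝ) * (p - 1)) = 0 := by
      rw [hBz] at key
      have : lam * L * ((N : ℝ) * (p - 1)) ≤ 0 := by linarith [key, t1]
      linarith [hlamL]
    exact (mul_eq_zero.1 h0).resolve_right (ne_of_gt hnp)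
  have hPA : P = A := by rw [hBz] at hNehari; linarith [hNehari, hlamL0]
  -- from B = 0, the integrand vanishes a.e.
  have hVz : ∀ᵐ x, (u x) ^ 2 * ‖fderiv ℝ u x‖ ^ 2 = 0 := by
    have h := (integral_eq_zero_iff_of_nonneg (fun x => by positivity) hV).1 (by rw [← hB, hBz])
    filter_upwards [h] with x hx using hx
  -- density lemma
  have hD : ∀ᵐ x, u x = 0 → fderiv ℝ u x = 0 := ae_fderiv_zero_on_zero_set volume u
  have hGz : ∀ᵐ x, ‖fderiv ℝ u x‖ ^ 2 = (0:ℝ) := by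
    filter_upwards [hVz, hD] with x h1 h2
    by_cases hu : u x = 0
    · rw [h2 hu]; simp
    · have : (u x) ^ 2 ≠ 0 := pow_ne_zero _ hu
      exact (mul_eq_zero.1 h1).resolve_left this
  have hAz : A = 0 := by
    rw [hA]
    rw [integral_congr_ae hGz]
    simp
  have hPz : P = 0 := by rw [hPA, hAz]
  have hPae : ∀ᵐ x, |u x| ^ (p + 1) = 0 :=
    (integral_eq_zero_iff_of_nonneg (fun x => Real.rpow_nonneg (abs_nonneg _) _) hP).1
      (by rw [← hPdef, hPz])
  filter_upwards [hPae] with x hx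
  have : |u x| = 0 := by
    by_contra h
    have h1 : 0 < |u x| := lt_of_le_of_ne (abs_nonneg _) (Ne.symm h)
    have := Real.rpow_pos_of_pos h1 (p + 1)
    linarith [this, hx ▸ this]
  simpa using abs_eq_zero.1 this
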